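/- Let μ be a finite complex measure on ℝ and let C : ℝ → ℂ be given by C(θ) = ∫_ℝ e^{i·ω·θ} dμ(ω). Suppose C is differentiable and satisfies a parameter shift rule: there is a finite set S ⊂ ℝ and coefficients c_Δ ∈ ℂ (Δ ∈ S) such that C'(θ) = ∑_{Δ ∈ S} c_Δ · C(θ + Δ) for all θ ∈ ℝ. Then C is a finite trigonometric sum: there exist L ∈ ℕ, coefficients β_1, …, β_L ∈ ℂ, and real frequencies γ_1, …, γ_L ∈ ℝ such that C(θ) = ∑_{k=1}^{L} β_k · e^{i·γ_k·θ} for all θ ∈ ℝ. -/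

import Mathlib

open Complex MeasureTheory Real Set Filter FourierTransform

noncomputable section PSRAux
namespace PSRAux

/-- The kernel `K s ω = ∫_0^s e^{iωt} dt` in closed form. -/
def Kf (s ω : ℝ) : ℂ :=
  if ω = 0 then (s : ℂ) else (Complex.exp (Complex.I * ω * s) - 1) / (Complex.I * ω)

lemma norm_exp_I_mul (a b : ℝ) : ‖Complex.exp (Complex.I * a * b)‖ = 1 := by
  rw [show Complex.I * a * b = ((a * b : ℝ) : ℂ) * Complex.I by push_cast; ring]
  rw [Complex.norm_exp_ofReal_mul_I]

lemma I_mul_ne_zero {ω : ℝ} (hω : ω ≠ 0) : Complex.I * (ω : ℂ) ≠ 0 := by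
  simp [Complex.I_ne_zero, Complex.ofReal_eq_zero, hω]

lemma integral_exp_eq_Kf (s ω : ℝ) :
    (∫ t in (0:ℝ)..s, Complex.exp (Complex.I * ω * t)) = Kf s ω := by
  rcases eq_or_ne ω 0 with h | h
  · simp [Kf, h]
  · rw [Kf, if_neg h]
    have := integral_exp_mul_complex (a := 0) (b := s) (I_mul_ne_zero h)
    simp_rw [mul_assoc] at this ⊢
    rw [this]
    simp

lemma norm_Kf_le (s ω : ℝ) : ‖Kf s ω‖ ≤ |s| := by
  rw [← integral_exp_eq_Kf]
  have := intervalIntegral.norm_integral_le_of_norm_le_const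
    (a := (0:ℝ)) (b := s) (C := 1)
    (f := fun t : ℝ => Complex.exp (Complex.I * ω * t)) ?_
  · simpa using this
  · intro t _
    show ‖Complex.exp (Complex.I * ω * t)‖ ≤ 1
    rw [show Complex.I * ω * t = ((ω * t : ℝ) : ℂ) * Complex.I by push_cast; ring]
    rw [Complex.norm_exp_ofReal_mul_I]

lemma I_mul_Kf (s ω : ℝ) : Complex.I * ω * Kf s ω = Complex.exp (Complex.I * ω * s) - 1 := by
  rcases eq_or_ne ω 0 with h | h
  · simp [Kf, h]
  · rw [Kf, if_neg h, mul_div_cancel₀ _ (I_mul_ne_zero h)]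

lemma Kf_eq_zero_iff {s ω : ℝ} (hω : ω ≠ 0) :
    Kf s ω = 0 ↔ ∃ n : ℤ, ω * s = n * (2 * π) := by
  rw [Kf, if_neg hω, div_eq_zero_iff]
  have h2 : ¬ (Complex.I * ω = 0) := I_mul_ne_zero hω
  simp only [h2, or_false, sub_eq_zero, Complex.exp_eq_one_iff]
  constructor
  · rintro ⟨n, hn⟩
    refine ⟨n, ?_⟩
    have : ((ω * s : ℝ) : ℂ) = ((n * (2 * π) : ℝ) : ℂ) := by
      apply mul_left_cancel₀ Complex.I_ne_zero
      push_cast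
      rw [show Complex.I * (↑ω * ↑s) = Complex.I * ↑ω * ↑s by ring, hn]
      push_cast
      ring
    exact_mod_cast Complex.ofReal_inj.mp this
  · rintro ⟨n, hn⟩
    refine ⟨n, ?_⟩
    rw [show Complex.I * ↑ω * ↑s = Complex.I * ((ω * s : ℝ) : ℂ) by push_cast; ring, hn]
    push_cast
    ring

lemma Kf_one_ne_or_sqrt2_ne (ω : ℝ) : Kf 1 ω ≠ 0 ∨ Kf (Real.sqrt 2) ω ≠ 0 := by
  rcases eq_or_ne ω 0 with h | h
  · left
    simp [Kf, h]
  by_contra hcon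
  push_neg at hcon
  obtain ⟨h1, h2⟩ := hcon
  obtain ⟨m, hm⟩ := (Kf_eq_zero_iff h).mp h1
  obtain ⟨n, hn⟩ := (Kf_eq_zero_iff h).mp h2
  rw [mul_one] at hm
  have hpi := Real.pi_ne_zero
  have hmne : (m : ℝ) ≠ 0 := by
    intro h0
    rw [h0] at hm
    simp at hm
    exact h hm
  have key : (m : ℝ) * Real.sqrt 2 = n := by
    rw [hm] at hn
    have h2pi : (2 : ℝ) * π ≠ 0 := by positivity
    apply mul_right_cancel₀ h2pi
    linarith [hn]
  have hsqrt : Real.sqrt 2 = (n : ℝ) / m := by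
    field_simp
    linarith [key]
  have : Irrational ((n : ℝ) / m) := hsqrt ▸ irrational_sqrt_two
  rw [show ((n : ℝ) / m) = ((n / m : ℚ) : ℝ) by push_cast; ring] at this
  exact Rat.not_irrational _ this

lemma measurable_Kf (s : ℝ) : Measurable (Kf s) := by
  apply Measurable.ite
  · exact measurableSet_eq_fun measurable_id measurable_const
  · exact measurable_const
  · apply Measurable.div
    · exact ((Complex.continuous_exp.comp (by continuity)).measurable).sub measurable_const
    · exact (by continuity : Continuous fun ω : ℝ => Complex.I * (ω:ℂ)).measurable

lemma abs_le_of_eq_sum (S : Finset ℝ) (c : ℝ → ℂ) (ω : ℝ)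
    (hω : Complex.I * (ω : ℂ) = ∑ Δ ∈ S, c Δ * Complex.exp (Complex.I * ω * Δ)) :
    |ω| ≤ ∑ Δ ∈ S, ‖c Δ‖ := by
  have h1 : |ω| = ‖Complex.I * (ω : ℂ)‖ := by
    rw [norm_mul, Complex.norm_I, one_mul, Complex.norm_real, Real.norm_eq_abs]
  rw [h1, hω]
  refine (norm_sum_le _ _).trans (Finset.sum_le_sum fun Δ _ => ?_)
  rw [norm_mul]
  have : ‖Complex.exp (Complex.I * ω * Δ)‖ = 1 := by
    rw [show Complex.I * ω * Δ = ((ω * Δ : ℝ) : ℂ) * Complex.I by push_cast; ring]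
    rw [Complex.norm_exp_ofReal_mul_I]
  rw [this, mul_one]

/-- The zero set of `ω ↦ iω - ∑ c_Δ e^{iωΔ}` is finite. -/
lemma zeros_finite (S : Finset ℝ) (c : ℝ → ℂ) :
    {ω : ℝ | Complex.I * (ω : ℂ) - ∑ Δ ∈ S, c Δ * Complex.exp (Complex.I * ω * Δ) = 0}.Finite := by
  set Z := {ω : ℝ | Complex.I * (ω : ℂ) - ∑ Δ ∈ S, c Δ * Complex.exp (Complex.I * ω * Δ) = 0}
    with hZ
  by_contra hinf
  rw [← Set.not_infinite, not_not] at hinf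
  set M : ℝ := 1 + ∑ Δ ∈ S, ‖c Δ‖ with hM
  have hMone : 1 ≤ M := by
    have : (0:ℝ) ≤ ∑ Δ ∈ S, ‖c Δ‖ := Finset.sum_nonneg fun Δ _ => norm_nonneg _
    linarith
  have hsub : Z ⊆ Set.Icc (-M) M := by
    intro ω hω
    rw [hZ, Set.mem_setOf_eq, sub_eq_zero] at hω
    have := abs_le_of_eq_sum S c ω hω
    rw [abs_le] at this
    constructor <;> [linarith [this.1]; linarith [this.2]]
  obtain ⟨x₀, -, hx₀⟩ := hinf.exists_accPt_of_subset_isCompact isCompact_Icc hsub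
  set H : ℂ → ℂ := fun z => Complex.I * z - ∑ Δ ∈ S, c Δ * Complex.exp (Complex.I * z * Δ)
    with hH
  have hdiffH : Differentiable ℂ H := by
    apply Differentiable.sub
    · exact differentiable_id.const_mul _
    · apply Differentiable.fun_sum
      intro Δ _
      exact (((differentiable_id.const_mul Complex.I).mul_const (Δ:ℂ)).cexp).const_mul _
  have hanH : AnalyticOnNhd ℂ H Set.univ := fun z _ => hdiffH.analyticAt z
  have freq : ∃ᶠ z in nhdsWithin (x₀ : ℂ) {(x₀ : ℂ)}ᶜ, H z = 0 := by
    rw [accPt_iff_frequently] at hx₀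
    have hfreq' : ∃ᶠ y in nhdsWithin x₀ {x₀}ᶜ, y ∈ Z := by
      rw [frequently_nhdsWithin_iff]
      exact hx₀.mono fun y hy => ⟨hy.2, hy.1⟩
    have htend : Filter.Tendsto (fun y : ℝ => (y : ℂ))
        (nhdsWithin x₀ {x₀}ᶜ) (nhdsWithin (x₀ : ℂ) {(x₀ : ℂ)}ᶜ) := by
      apply tendsto_nhdsWithin_of_tendsto_nhds_of_eventually_within
      · exact (Complex.continuous_ofReal.tendsto x₀).mono_left nhdsWithin_le_nhds
      · filter_upwards [self_mem_nhdsWithin] with y hy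
        simp only [Set.mem_compl_iff, Set.mem_singleton_iff] at hy ⊢
        exact fun hcon => hy (Complex.ofReal_inj.mp hcon)
    apply htend.frequently
    apply hfreq'.mono
    intro y hy
    rw [hZ, Set.mem_setOf_eq] at hy
    simpa [hH] using hy
  have heq := hanH.eqOn_zero_of_preconnected_of_frequently_eq_zero isPreconnected_univ
    (Set.mem_univ (x₀ : ℂ)) freq
  have h2M := heq (Set.mem_univ ((2 * M : ℝ) : ℂ))
  rw [hH] at h2M
  simp only [Pi.zero_apply, sub_eq_zero] at h2M
  have := abs_le_of_eq_sum S c (2 * M) (by exact_mod_cast h2M)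
  have habs : |2 * M| = 2 * M := abs_of_pos (by linarith)
  rw [habs, hM] at this
  linarith

/-- Injectivity of the Fourier transform of a complex density against a finite measure. -/
lemma ae_zero_of_forall_integral_exp (μ : Measure ℝ) [IsFiniteMeasure μ] (g : ℝ → ℂ)
    (hg : Integrable g μ)
    (hvan : ∀ θ : ℝ, ∫ ω, Complex.exp (Complex.I * ω * θ) * g ω ∂μ = 0) :
    ∀ᵐ ω ∂μ, g ω = 0 := by
  apply ae_eq_zero_of_integral_contDiff_smul_eq_zero hg.locallyIntegrable
  intro ψ hψ hψsupp
  set ψc : ℝ → ℂ := fun x => (ψ x : ℂ) with hψcdef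
  have hsmooth : ContDiff ℝ (⊤ : ℕ∞) ψc := Complex.ofRealCLM.contDiff.comp hψ
  have hsupp : HasCompactSupport ψc :=
    hψsupp.comp_left (g := fun r : ℝ => (r : ℂ)) Complex.ofReal_zero
  have hdecay : ∀ (k n : ℕ), ∃ C, ∀ x, ‖x‖ ^ k * ‖iteratedFDeriv ℝ n ψc x‖ ≤ C := by
    intro k n
    have h1 : Continuous fun x : ℝ => ‖x‖ ^ k * ‖iteratedFDeriv ℝ n ψc x‖ :=
      ((continuous_norm).pow k).mul
        ((hsmooth.continuous_iteratedFDeriv (mod_cast le_top)).norm)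
    have h2 : HasCompactSupport fun x : ℝ => ‖x‖ ^ k * ‖iteratedFDeriv ℝ n ψc x‖ :=
      ((hsupp.iteratedFDeriv n).norm).mul_left
    obtain ⟨C, hC⟩ := h2.exists_bound_of_continuous h1
    refine ⟨C, fun x => ?_⟩
    have := hC x
    rwa [Real.norm_eq_abs, _root_.abs_of_nonneg (by positivity)] at this
  set ψS : SchwartzMap ℝ ℂ := ⟨ψc, hsmooth, hdecay⟩ with hψS
  have hψint : Integrable ψc volume :=
    hsmooth.continuous.integrable_of_hasCompactSupport hsupp
  have hFeq : 𝓕 ψc = (SchwartzMap.fourierTransformCLM ℂ ψS : ℝ → ℂ) := by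
    rw [SchwartzMap.fourierTransformCLM_apply]
    rfl
  have hFint : Integrable (𝓕 ψc) volume := by
    rw [hFeq]
    exact (SchwartzMap.fourierTransformCLM ℂ ψS).integrable
  have hFcont : Continuous (𝓕 ψc) := by
    rw [hFeq]
    exact (SchwartzMap.fourierTransformCLM ℂ ψS).continuous
  have hinv : ∀ x : ℝ,
      ψc x = ∫ θ : ℝ, Complex.exp (Complex.I * x * ((2 * π * θ : ℝ) : ℂ)) * 𝓕 ψc θ := by
    intro x
    have h0 := hsmooth.continuous.fourierInv_fourier_eq hψint hFint
    conv_lhs => rw [← h0]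
    rw [Real.fourierInv_eq']
    congr 1
    funext θ
    rw [smul_eq_mul]
    congr 1
    simp only [RCLike.inner_apply, starRingEnd_apply, star_trivial]
    push_cast
    ring
  -- Fubini and conclusion
  have hint : Integrable (Function.uncurry fun (x θ : ℝ) =>
      Complex.exp (Complex.I * x * ((2 * π * θ : ℝ) : ℂ)) * 𝓕 ψc θ * g x)
      (μ.prod volume) := by
    have hcont2 : Continuous fun p : ℝ × ℝ =>
        Complex.exp (Complex.I * p.1 * ((2 * π * p.2 : ℝ) : ℂ)) * 𝓕 ψc p.2 := by
      apply Continuous.mul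
      · apply Complex.continuous_exp.comp
        exact ((continuous_const.mul (Complex.continuous_ofReal.comp continuous_fst)).mul
          (Complex.continuous_ofReal.comp ((continuous_const.mul continuous_snd))))
      · exact hFcont.comp continuous_snd
    have haesm : AEStronglyMeasurable (Function.uncurry fun (x θ : ℝ) =>
        Complex.exp (Complex.I * x * ((2 * π * θ : ℝ) : ℂ)) * 𝓕 ψc θ * g x)
        (μ.prod volume) := by
      have := hcont2.aestronglyMeasurable.mul (hg.1.comp_fst (ν := volume))
      exact this
    apply Integrable.mono' (hg.norm.mul_prod hFint.norm) haesm
    filter_upwards with p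
    rw [Function.uncurry_def]
    rw [norm_mul, norm_mul]
    have hexp : ‖Complex.exp (Complex.I * p.1 * ((2 * π * p.2 : ℝ) : ℂ))‖ = 1 := by
      rw [show Complex.I * p.1 * ((2 * π * p.2 : ℝ) : ℂ)
          = ((p.1 * (2 * π * p.2) : ℝ) : ℂ) * Complex.I by push_cast; ring]
      rw [Complex.norm_exp_ofReal_mul_I]
    rw [hexp, one_mul]
    exact le_of_eq (mul_comm _ _)
  have hsm : ∫ x, ψ x • g x ∂μ = ∫ x, ψc x * g x ∂μ := by
    simp_rw [hψcdef, Complex.real_smul]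
  rw [hsm]
  have step1 : ∫ x, ψc x * g x ∂μ = ∫ x, ∫ θ : ℝ,
      Complex.exp (Complex.I * x * ((2 * π * θ : ℝ) : ℂ)) * 𝓕 ψc θ * g x ∂volume ∂μ := by
    congr 1
    funext x
    rw [hinv x, ← integral_mul_const]
  rw [step1, integral_integral_swap hint]
  have step2 : ∀ θ : ℝ, ∫ x,
      Complex.exp (Complex.I * x * ((2 * π * θ : ℝ) : ℂ)) * 𝓕 ψc θ * g x ∂μ = 0 := by
    intro θ
    have : ∀ x : ℝ, Complex.exp (Complex.I * x * ((2 * π * θ : ℝ) : ℂ)) * 𝓕 ψc θ * g x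
        = 𝓕 ψc θ * (Complex.exp (Complex.I * x * ((2 * π * θ : ℝ) : ℂ)) * g x) := by
      intro x; ring
    simp_rw [this]
    rw [integral_const_mul, hvan (2 * π * θ), mul_zero]
  simp_rw [step2]
  simp

end PSRAux
end PSRAux

/-- **Necessity direction of the parameter-shift-rule characterization**: if
`C(θ) = ∫ e^{iωθ} dμ(ω)` is the inverse Fourier transform of a finite complex measure
(represented by a complex density `f` integrable with respect to a finite positive measure `μ`),
`C` is differentiable, and `C` satisfies a parameter shift rule
`C'(θ) = ∑_{Δ ∈ S} c_Δ C(θ + Δ)`, then `C` is a finite trigonometric sum. -/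
theorem parameter_shift_rule_implies_trig_sum
    (μ : Measure ℝ) [IsFiniteMeasure μ] (f : ℝ → ℂ) (hf : Integrable f μ)
    (C : ℝ → ℂ)
    (hC : ∀ θ : ℝ, C θ = ∫ ω : ℝ, Complex.exp (Complex.I * (ω : ℂ) * (θ : ℂ)) * f ω ∂μ)
    (hdiff : Differentiable ℝ C)
    (S : Finset ℝ) (c : ℝ → ℂ)
    (hshift : ∀ θ : ℝ, deriv C θ = ∑ Δ ∈ S, c Δ * C (θ + Δ)) :
    ∃ (L : ℕ) (β : Fin L → ℂ) (γ : Fin L → ℝ), ∀ θ : ℝ,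
      C θ = ∑ k, β k * Complex.exp (Complex.I * (γ k : ℂ) * (θ : ℂ)) := by
  classical
  -- the "frequency filter" function
  set h : ℝ → ℂ := fun ω => Complex.I * ω - ∑ Δ ∈ S, c Δ * Complex.exp (Complex.I * ω * Δ)
    with hhdef
  have hcont_h : Continuous h := by
    apply Continuous.sub
    · exact continuous_const.mul Complex.continuous_ofReal
    · apply continuous_finset_sum
      intro Δ _
      exact continuous_const.mul (Complex.continuous_exp.comp
        ((continuous_const.mul Complex.continuous_ofReal).mul continuous_const))
  -- integrability helper
  have hbdd : ∀ (b : ℝ → ℂ), AEStronglyMeasurable b μ → (∃ B, ∀ ω, ‖b ω‖ ≤ B) →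
      Integrable (fun ω => b ω * f ω) μ := fun b hm hB => hf.bdd_mul hm (Filter.Eventually.of_forall hB.choose_spec)
  have hint1 : ∀ θ : ℝ, Integrable (fun ω : ℝ => Complex.exp (Complex.I * ω * θ) * f ω) μ := by
    intro θ
    apply hbdd
    · exact (Complex.continuous_exp.comp
        ((continuous_const.mul Complex.continuous_ofReal).mul continuous_const)).aestronglyMeasurable
    · exact ⟨1, fun ω => le_of_eq (PSRAux.norm_exp_I_mul ω θ)⟩
  -- Step 1 : FTC
  have hshiftcont : ∀ Δ : ℝ, Continuous fun t : ℝ => C (t + Δ) :=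
    fun Δ => hdiff.continuous.comp (continuous_id.add continuous_const)
  have hderivC : deriv C = fun t => ∑ Δ ∈ S, c Δ * C (t + Δ) := funext hshift
  have hderivcont : Continuous (deriv C) := by
    rw [hderivC]
    exact continuous_finset_sum _ fun Δ _ => continuous_const.mul (hshiftcont Δ)
  have step1 : ∀ a b : ℝ, C b - C a = ∑ Δ ∈ S, c Δ * ∫ t in a..b, C (t + Δ) := by
    intro a b
    have hFTC := intervalIntegral.integral_deriv_eq_sub (a := a) (b := b) (f := C)
      (fun x _ => hdiff x) (hderivcont.intervalIntegrable a b)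
    rw [← hFTC]
    rw [intervalIntegral.integral_congr (g := fun t => ∑ Δ ∈ S, c Δ * C (t + Δ))
      (fun y _ => hshift y)]
    rw [intervalIntegral.integral_finset_sum (f := fun Δ t => c Δ * C (t + Δ))
      (fun Δ _ => (continuous_const.mul (hshiftcont Δ)).intervalIntegrable a b)]
    simp_rw [intervalIntegral.integral_const_mul]
  -- Step 2 : Fubini
  have step2 : ∀ (Δ a b : ℝ), a ≤ b → (∫ t in a..b, C (t + Δ)) =
      ∫ ω, (∫ t in a..b, Complex.exp (Complex.I * ω * (t + Δ))) * f ω ∂μ := by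
    intro Δ a b hab
    haveI hμfin : IsFiniteMeasure (volume.restrict (Set.Ioc a b)) :=
      ⟨by rw [Measure.restrict_apply_univ]; exact measure_Ioc_lt_top⟩
    have hintprod : Integrable (Function.uncurry fun (t ω : ℝ) =>
        Complex.exp (Complex.I * ω * (t + Δ)) * f ω)
        ((volume.restrict (Set.Ioc a b)).prod μ) := by
      have haesm : AEStronglyMeasurable (Function.uncurry fun (t ω : ℝ) =>
          Complex.exp (Complex.I * ω * (t + Δ)) * f ω)
          ((volume.restrict (Set.Ioc a b)).prod μ) := by
        apply AEStronglyMeasurable.mul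
        · exact (Complex.continuous_exp.comp
            ((continuous_const.mul (Complex.continuous_ofReal.comp continuous_snd)).mul
              ((Complex.continuous_ofReal.comp continuous_fst).add
                continuous_const))).aestronglyMeasurable
        · exact hf.1.comp_snd
      apply Integrable.mono' ((integrable_const (1:ℝ)).mul_prod hf.norm) haesm
      filter_upwards with p
      have hone : ‖Complex.exp (Complex.I * p.2 * ((p.1:ℂ) + (Δ:ℂ)))‖ = 1 := by
        rw [show ((p.1:ℂ) + (Δ:ℂ)) = ((p.1 + Δ : ℝ) : ℂ) by push_cast; ring]
        exact PSRAux.norm_exp_I_mul p.2 (p.1 + Δ)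
      simp [Function.uncurry_def, norm_mul, hone]
    calc (∫ t in a..b, C (t + Δ))
        = ∫ t in Set.Ioc a b, (∫ ω, Complex.exp (Complex.I * ω * (t + Δ)) * f ω ∂μ) := by
          rw [intervalIntegral.integral_of_le hab]
          apply integral_congr_ae
          filter_upwards with t
          rw [hC (t + Δ)]
          push_cast
          ring_nf
      _ = ∫ ω, (∫ t in Set.Ioc a b, Complex.exp (Complex.I * ω * (t + Δ))) * f ω ∂μ := by
          rw [MeasureTheory.integral_integral_swap hintprod]
          congr 1
          funext ω
          rw [integral_mul_const]
      _ = ∫ ω, (∫ t in a..b, Complex.exp (Complex.I * ω * (t + Δ))) * f ω ∂μ := by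
          congr 1
          funext ω
          rw [intervalIntegral.integral_of_le hab]
  -- Step 3 : the inner kernel integral
  have step3 : ∀ (ω θ s Δ : ℝ), (∫ t in θ..(θ + s), Complex.exp (Complex.I * ω * (t + Δ)))
      = Complex.exp (Complex.I * ω * θ) *
        (Complex.exp (Complex.I * ω * Δ) * PSRAux.Kf s ω) := by
    intro ω θ s Δ
    have hsplit : ∀ t : ℝ, Complex.exp (Complex.I * ω * (t + Δ))
        = (Complex.exp (Complex.I * ω * θ) * Complex.exp (Complex.I * ω * Δ)) *
          Complex.exp (Complex.I * ω * ((t - θ : ℝ) : ℂ)) := by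
      intro t
      rw [← Complex.exp_add, ← Complex.exp_add]
      congr 1
      push_cast
      ring
    simp_rw [hsplit]
    rw [intervalIntegral.integral_const_mul]
    rw [intervalIntegral.integral_comp_sub_right (fun u : ℝ => Complex.exp (Complex.I * ω * u)) θ]
    simp only [sub_self, add_sub_cancel_left]
    rw [PSRAux.integral_exp_eq_Kf]
    ring
  -- integrability of the summand kernels
  have hintA : ∀ (θ s Δ : ℝ), Integrable (fun ω : ℝ =>
      (Complex.exp (Complex.I * ω * θ) * (Complex.exp (Complex.I * ω * Δ) * PSRAux.Kf s ω))
        * f ω) μ := by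
    intro θ s Δ
    apply hbdd
    · apply AEStronglyMeasurable.mul
      · exact (Complex.continuous_exp.comp ((continuous_const.mul
          Complex.continuous_ofReal).mul continuous_const)).aestronglyMeasurable
      · exact ((Complex.continuous_exp.comp ((continuous_const.mul
          Complex.continuous_ofReal).mul continuous_const)).measurable.mul
            (PSRAux.measurable_Kf s)).aestronglyMeasurable
    · refine ⟨|s|, fun ω => ?_⟩
      rw [norm_mul, norm_mul, PSRAux.norm_exp_I_mul, PSRAux.norm_exp_I_mul, one_mul, one_mul]
      exact PSRAux.norm_Kf_le s ω
  -- Step 4 : the key vanishing identity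
  have key : ∀ s : ℝ, 0 < s → ∀ θ : ℝ, (∫ ω, Complex.exp (Complex.I * ω * θ) *
      (PSRAux.Kf s ω * (h ω * f ω)) ∂μ) = 0 := by
    intro s hs θ
    have hab : θ ≤ θ + s := by linarith
    -- left-hand side of the shift rule, integrated
    have e1 : C (θ + s) - C θ = ∫ ω, (Complex.exp (Complex.I * ω * (θ + s : ℝ))
        - Complex.exp (Complex.I * ω * θ)) * f ω ∂μ := by
      rw [hC (θ + s), hC θ, ← integral_sub (hint1 (θ + s)) (hint1 θ)]
      congr 1
      funext ω
      ring
    -- each summand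
    have hterm : ∀ Δ : ℝ, (∫ t in θ..(θ + s), C (t + Δ)) =
        ∫ ω, (Complex.exp (Complex.I * ω * θ) *
          (Complex.exp (Complex.I * ω * Δ) * PSRAux.Kf s ω)) * f ω ∂μ := by
      intro Δ
      rw [step2 Δ θ (θ + s) hab]
      congr 1
      funext ω
      rw [step3]
    have hsum := step1 θ (θ + s)
    rw [e1] at hsum
    have e3 : ∑ Δ ∈ S, c Δ * ∫ t in θ..(θ + s), C (t + Δ) =
        ∫ ω, ∑ Δ ∈ S, c Δ * ((Complex.exp (Complex.I * ω * θ) *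
          (Complex.exp (Complex.I * ω * Δ) * PSRAux.Kf s ω)) * f ω) ∂μ := by
      rw [integral_finset_sum _ (fun Δ _ => (hintA θ s Δ).const_mul (c Δ))]
      congr 1
      funext Δ
      rw [hterm Δ, integral_const_mul]
    rw [e3] at hsum
    -- combine the two sides into a single vanishing integral
    have hintL : Integrable (fun ω : ℝ => (Complex.exp (Complex.I * ω * (θ + s : ℝ))
        - Complex.exp (Complex.I * ω * θ)) * f ω) μ := by
      apply hbdd
      · apply AEStronglyMeasurable.sub <;>
          exact (Complex.continuous_exp.comp ((continuous_const.mul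
            Complex.continuous_ofReal).mul continuous_const)).aestronglyMeasurable
      · refine ⟨2, fun ω => ?_⟩
        refine (norm_sub_le _ _).trans ?_
        rw [PSRAux.norm_exp_I_mul, PSRAux.norm_exp_I_mul]
        norm_num
    have hintR : Integrable (fun ω : ℝ => ∑ Δ ∈ S, c Δ * ((Complex.exp (Complex.I * ω * θ) *
        (Complex.exp (Complex.I * ω * Δ) * PSRAux.Kf s ω)) * f ω)) μ :=
      integrable_finset_sum _ (fun Δ _ => (hintA θ s Δ).const_mul (c Δ))
    have e4 : ∫ ω, ((Complex.exp (Complex.I * ω * (θ + s : ℝ))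
        - Complex.exp (Complex.I * ω * θ)) * f ω
        - ∑ Δ ∈ S, c Δ * ((Complex.exp (Complex.I * ω * θ) *
          (Complex.exp (Complex.I * ω * Δ) * PSRAux.Kf s ω)) * f ω)) ∂μ = 0 := by
      rw [integral_sub hintL hintR, ← hsum]
      ring
    rw [← e4]
    apply integral_congr_ae
    filter_upwards with ω
    -- pointwise algebra
    have hKI := PSRAux.I_mul_Kf s ω
    have hexpadd : Complex.exp (Complex.I * ω * (θ + s : ℝ)) =
        Complex.exp (Complex.I * ω * θ) * Complex.exp (Complex.I * ω * s) := by
      rw [← Complex.exp_add]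
      congr 1
      push_cast
      ring
    have hsummul : ∑ Δ ∈ S, c Δ * ((Complex.exp (Complex.I * ω * θ) *
        (Complex.exp (Complex.I * ω * Δ) * PSRAux.Kf s ω)) * f ω)
        = (Complex.exp (Complex.I * ω * θ) * PSRAux.Kf s ω * f ω) *
            ∑ Δ ∈ S, c Δ * Complex.exp (Complex.I * ω * Δ) := by
      rw [Finset.mul_sum]
      apply Finset.sum_congr rfl
      intro Δ _
      ring
    rw [hhdef]
    simp only []
    rw [hsummul, hexpadd]
    have : Complex.exp (Complex.I * ω * s) = 1 + Complex.I * ω * PSRAux.Kf s ω := by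
      rw [hKI]; ring
    rw [this]
    ring
  -- Step 5 : injectivity of the Fourier transform
  have hker : ∀ s : ℝ, 0 < s → ∀ᵐ ω ∂μ, PSRAux.Kf s ω * (h ω * f ω) = 0 := by
    intro s hs
    apply PSRAux.ae_zero_of_forall_integral_exp μ _ ?_ (key s hs)
    have : Integrable (fun ω : ℝ => (PSRAux.Kf s ω * h ω) * f ω) μ := by
      apply hbdd
      · exact ((PSRAux.measurable_Kf s).mul hcont_h.measurable).aestronglyMeasurable
      · refine ⟨2 + (∑ Δ ∈ S, ‖c Δ‖) * |s|, fun ω => ?_⟩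
        have hid : PSRAux.Kf s ω * h ω = (Complex.exp (Complex.I * ω * s) - 1)
            - (∑ Δ ∈ S, c Δ * Complex.exp (Complex.I * ω * Δ)) * PSRAux.Kf s ω := by
          rw [hhdef]
          simp only []
          rw [← PSRAux.I_mul_Kf s ω]
          ring
        rw [hid]
        refine (norm_sub_le _ _).trans ?_
        have h1 : ‖Complex.exp (Complex.I * ω * s) - 1‖ ≤ 2 := by
          refine (norm_sub_le _ _).trans ?_
          rw [PSRAux.norm_exp_I_mul]
          norm_num
        have h2 : ‖(∑ Δ ∈ S, c Δ * Complex.exp (Complex.I * ω * Δ)) * PSRAux.Kf s ω‖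
            ≤ (∑ Δ ∈ S, ‖c Δ‖) * |s| := by
          rw [norm_mul]
          apply mul_le_mul _ (PSRAux.norm_Kf_le s ω) (norm_nonneg _)
            (Finset.sum_nonneg fun Δ _ => norm_nonneg _)
          refine (norm_sum_le _ _).trans (Finset.sum_le_sum fun Δ _ => ?_)
          rw [norm_mul, PSRAux.norm_exp_I_mul, mul_one]
        linarith
    apply this.congr
    filter_upwards with ω
    ring
  -- Step 6 : combine s = 1 and s = √2
  have hprod : ∀ᵐ ω ∂μ, h ω * f ω = 0 := by
    have hs2 : (0:ℝ) < Real.sqrt 2 := Real.sqrt_pos.mpr (by norm_num)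
    filter_upwards [hker 1 one_pos, hker (Real.sqrt 2) hs2] with ω h1 h2
    rcases PSRAux.Kf_one_ne_or_sqrt2_ne ω with hne | hne
    · exact (mul_eq_zero.mp h1).resolve_left hne
    · exact (mul_eq_zero.mp h2).resolve_left hne
  -- Step 7 : finiteness of the zero set, and conclusion
  have hZfin : {ω : ℝ | Complex.I * ω - ∑ Δ ∈ S, c Δ * Complex.exp (Complex.I * ω * Δ)
      = 0}.Finite := PSRAux.zeros_finite S c
  set T : Finset ℝ := hZfin.toFinset with hT
  refine ⟨T.card,
    fun k => ((μ {(T.equivFin.symm k : ℝ)}).toReal : ℂ) * f (T.equivFin.symm k : ℝ),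
    fun k => (T.equivFin.symm k : ℝ), ?_⟩
  intro θ
  have hind : (fun ω : ℝ => Complex.exp (Complex.I * ω * θ) * f ω) =ᵐ[μ]
      Set.indicator (↑T) (fun ω : ℝ => Complex.exp (Complex.I * ω * θ) * f ω) := by
    filter_upwards [hprod] with ω hω
    by_cases hmem : ω ∈ (T : Set ℝ)
    · rw [Set.indicator_of_mem hmem]
    · rw [Set.indicator_of_notMem hmem]
      have hf0 : f ω = 0 := by
        rcases mul_eq_zero.mp hω with h0 | h0
        · exfalso
          apply hmem
          rw [hT]
          simp only [Finset.coe_sort_coe, Set.Finite.coe_toFinset, Set.mem_setOf_eq]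
          rw [hhdef] at h0
          exact h0
        · exact h0
      rw [hf0, mul_zero]
  rw [hC θ, integral_congr_ae hind, integral_indicator T.measurableSet,
    integral_finset _ ((hint1 θ).integrableOn)]
  simp only [measureReal_def]
  rw [← Finset.sum_coe_sort T]
  rw [← Equiv.sum_comp T.equivFin.symm
    (fun x : {x // x ∈ T} => (μ {(x : ℝ)}).toReal •
      (Complex.exp (Complex.I * (x : ℝ) * θ) * f (x : ℝ)))]
  apply Finset.sum_congr rfl
  intro k _
  rw [Complex.real_smul]
  push_cast
  ring
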